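/- Correctness of the weighted CYK algorithm: for a weighted CFG G' in Chomsky normal form (productions A →^m BC and A →^m a with error counts m ∈ ℕ) and input string a₁...aₙ, define tables D(i,j,A) by D(i,i+1,A) = min{m : (A →^m aᵢ) ∈ P'} and D(i,j,A) = min over productions A →^m BC and i < k < j of m + D(i,k,B) + D(k,j,C). Then D(i,j,A) equals the minimum total error count ℓ such that A ⇒*_{ℓ} aᵢ...a_{j-1}, or ∞ if no derivation exists. -/

import Mathlib

/-- Weighted derivation relation for a weighted CFG given by a production relation
`P A γ c` (the production `A →^c γ` has error count `c`). -/
inductive Derives {N T : Type*} (P : N → List (N ⊕ T) → ℕ → Prop) :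
    List (N ⊕ T) → List (N ⊕ T) → ℕ → Prop
  | refl (w : List (N ⊕ T)) : Derives P w w 0
  | step {α β γ w : List (N ⊕ T)} {A : N} {c₁ c₂ : ℕ} :
      P A γ c₂ → Derives P (α ++ γ ++ β) w c₁ →
      Derives P (α ++ [Sum.inl A] ++ β) w (c₁ + c₂)

/-- The production relation of a weighted CNF grammar with binary rules
`R2 A B C m` (i.e. `A →^m BC`) and terminal rules `R1 A a m` (i.e. `A →^m a`). -/
def cnfProds {N T : Type*} (R2 : N → N → N → ℕ → Prop) (R1 : N → T → ℕ → Prop) :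
    N → List (N ⊕ T) → ℕ → Prop := fun A rhs m =>
  (∃ B C : N, rhs = [Sum.inl B, Sum.inl C] ∧ R2 A B C m) ∨
  (∃ a : T, rhs = [Sum.inr a] ∧ R1 A a m)

section Helpers
variable {N T : Type*} {P : N → List (N ⊕ T) → ℕ → Prop}

lemma derives_cast {u v : List (N ⊕ T)} {c c' : ℕ} (h : Derives P u v c) (e : c = c') :
    Derives P u v c' := e ▸ h

lemma derives_trans {u v x : List (N ⊕ T)} {c d : ℕ}
    (h1 : Derives P u v c) (h2 : Derives P v x d) : Derives P u x (c + d) := by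
  induction h1 with
  | refl => simpa using h2
  | step hp _ ih => exact derives_cast (Derives.step hp (ih h2)) (by omega)

lemma derives_context {u v : List (N ⊕ T)} {c : ℕ} (l r : List (N ⊕ T))
    (h : Derives P u v c) : Derives P (l ++ u ++ r) (l ++ v ++ r) c := by
  induction h with
  | refl => exact Derives.refl _
  | @step α β γ x A c₁ c₂ hp _ ih =>
    have h2 : Derives P ((l ++ α) ++ γ ++ (β ++ r)) (l ++ x ++ r) c₁ := by
      simpa [List.append_assoc] using ih
    simpa [List.append_assoc] using Derives.step hp h2

lemma derives_append {u v u' v' : List (N ⊕ T)} {c d : ℕ}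
    (h1 : Derives P u v c) (h2 : Derives P u' v' d) :
    Derives P (u ++ u') (v ++ v') (c + d) := by
  have a1 : Derives P (u ++ u') (v ++ u') c := by
    simpa using derives_context [] u' h1
  have a2 : Derives P (v ++ u') (v ++ v') d := by
    simpa using derives_context v [] h2
  exact derives_trans a1 a2

lemma middle_split {X : Type*} {u u' α β : List X} {A : X} (h : u ++ u' = α ++ [A] ++ β) :
    (∃ β', u = α ++ [A] ++ β' ∧ β = β' ++ u') ∨ (∃ α', u' = α' ++ [A] ++ β ∧ α = u ++ α') := by
  rcases List.append_eq_append_iff.mp h with ⟨a', ha1, ha2⟩ | ⟨c', hc1, hc2⟩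
  · rcases List.append_eq_append_iff.mp ha1 with ⟨b', hb1, hb2⟩ | ⟨u₂, hu1, hu2⟩
    · rcases b' with _ | ⟨y, b''⟩
      · simp at hb2
        exact Or.inr ⟨[], by simp [ha2, hb2], by simp [hb1]⟩
      · obtain ⟨hy, hb'', ha'⟩ : A = y ∧ b'' = [] ∧ a' = [] := by
          simpa [List.append_eq_nil_iff] using hb2
        subst hy hb'' ha'
        exact Or.inl ⟨[], by simpa using hb1, by simp [ha2]⟩
    · exact Or.inr ⟨u₂, by simp [ha2, hu2, List.append_assoc], hu1⟩
  · exact Or.inl ⟨c', by simpa using hc1, hc2⟩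

lemma derives_append_split {u u' x : List (N ⊕ T)} {c : ℕ}
    (h : Derives P (u ++ u') x c) :
    ∃ v v' c₁ c₂, x = v ++ v' ∧ c = c₁ + c₂ ∧ Derives P u v c₁ ∧ Derives P u' v' c₂ := by
  generalize hw : u ++ u' = z at h
  induction h generalizing u u' with
  | refl => exact ⟨u, u', 0, 0, hw.symm, rfl, Derives.refl _, Derives.refl _⟩
  | @step α β γ x A c₁ c₂ hp hder ih =>
    rcases middle_split hw with ⟨β', hu, hβ⟩ | ⟨α', hu', hα⟩
    · rcases ih (u := α ++ γ ++ β') (u' := u') (by simp [hβ, List.append_assoc]) with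
        ⟨v, v', d₁, d₂, hx, hc, hd1, hd2⟩
      exact ⟨v, v', d₁ + c₂, d₂, hx, by omega, hu ▸ Derives.step hp hd1, hd2⟩
    · rcases ih (u := u) (u' := α' ++ γ ++ β) (by simp [hα, List.append_assoc]) with
        ⟨v, v', d₁, d₂, hx, hc, hd1, hd2⟩
      exact ⟨v, v', d₁, d₂ + c₂, hx, by omega, hd1, hu' ▸ Derives.step hp hd2⟩

end Helpers

lemma derives_terminal_eq {u : List T} {v : List (N ⊕ T)} {c : ℕ}
    (h : Derives P (u.map Sum.inr) v c) : v = u.map Sum.inr ∧ c = 0 := by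
  generalize hw : u.map Sum.inr = z at h
  cases h with
  | refl => exact ⟨rfl, rfl⟩
  | @step α β γ x A c₁ c₂ hp hder =>
    exfalso
    have : Sum.inl A ∈ u.map Sum.inr := by rw [hw]; simp
    simp at this

lemma derives_head_inversion {A : N} {v : List (N ⊕ T)} {c : ℕ}
    (h : Derives P [Sum.inl A] v c) :
    (v = [Sum.inl A] ∧ c = 0) ∨
    ∃ γ c₁ c₂, P A γ c₂ ∧ Derives P γ v c₁ ∧ c = c₁ + c₂ := by
  generalize hw : [Sum.inl A] = z at h
  cases h with
  | refl => exact Or.inl ⟨rfl, rfl⟩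
  | @step α β γ x A' c₁ c₂ hp hder =>
    have hα : α = [] ∧ A' = A ∧ β = [] := by
      have hl := congrArg List.length hw
      simp at hl
      have hα : α = [] := by rcases α with _|_ <;> simp_all
      have hβ : β = [] := by rcases β with _|_ <;> simp_all
      subst hα hβ; simp at hw; exact ⟨rfl, hw.symm, rfl⟩
    obtain ⟨h1, h2, h3⟩ := hα
    subst h1 h2 h3
    exact Or.inr ⟨γ, c₁, c₂, hp, by simpa using hder, rfl⟩

variable {R2 : N → N → N → ℕ → Prop} {R1 : N → T → ℕ → Prop}

lemma cnf_length_le {u v : List (N ⊕ T)} {c : ℕ}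
    (h : Derives (cnfProds R2 R1) u v c) : u.length ≤ v.length := by
  induction h with
  | refl => exact le_rfl
  | @step α β γ x A c₁ c₂ hp _ ih =>
    have hγ : 1 ≤ γ.length := by
      rcases hp with ⟨B, C, rfl, -⟩ | ⟨a, rfl, -⟩ <;> simp
    simp at ih ⊢; omega

lemma derives_single_iff {A : N} {u : List T} {m : ℕ} :
    Derives (cnfProds R2 R1) [Sum.inl A] (u.map Sum.inr) m ↔
    (∃ a, u = [a] ∧ R1 A a m) ∨
    (∃ (B C : N) (m₀ : ℕ) (u₁ u₂ : List T) (c₁ c₂ : ℕ),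
      R2 A B C m₀ ∧ u = u₁ ++ u₂ ∧ u₁ ≠ [] ∧ u₂ ≠ [] ∧
      Derives (cnfProds R2 R1) [Sum.inl B] (u₁.map Sum.inr) c₁ ∧
      Derives (cnfProds R2 R1) [Sum.inl C] (u₂.map Sum.inr) c₂ ∧
      m = m₀ + c₁ + c₂) := by
  constructor
  · intro h
    rcases derives_head_inversion h with ⟨hv, -⟩ | ⟨γ, c₁, c₂, hp, hder, hc⟩
    · exfalso
      rcases u with _ | ⟨a, u⟩ <;> simp at hv
    rcases hp with ⟨B, C, rfl, hR⟩ | ⟨a, rfl, hR⟩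
    · -- binary
      have hsplit := derives_append_split (u := [Sum.inl B]) (u' := [Sum.inl C])
        (by simpa using hder)
      obtain ⟨v, v', d₁, d₂, hx, hcx, hd1, hd2⟩ := hsplit
      obtain ⟨u₁, u₂, rfl, h1, h2⟩ := List.map_eq_append_iff.mp hx
      refine Or.inr ⟨B, C, c₂, u₁, u₂, d₁, d₂, hR, rfl, ?_, ?_, h1 ▸ hd1, h2 ▸ hd2, by omega⟩
      · have := cnf_length_le hd1; subst h1
        intro hu; subst hu; simp at this
      · have := cnf_length_le hd2; subst h2
        intro hu; subst hu; simp at this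
    · -- terminal
      obtain ⟨hv, hc1⟩ := derives_terminal_eq (u := [a]) (by simpa using hder)
      have hu : u = [a] := by
        rcases u with _ | ⟨b, u⟩
        · simp at hv
        · simp only [List.map_cons, List.map_nil, List.cons.injEq,
            Sum.inr.injEq, List.map_eq_nil_iff] at hv
          obtain ⟨rfl, rfl⟩ := hv
          rfl
      have hm : m = c₂ := by omega
      exact Or.inl ⟨a, hu, hm ▸ hR⟩
  · intro h
    rcases h with ⟨a, rfl, hR⟩ | ⟨B, C, m₀, u₁, u₂, c₁, c₂, hR, rfl, -, -, hd1, hd2, rfl⟩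
    · have := Derives.step (α := []) (β := []) (P := cnfProds R2 R1)
        (Or.inr ⟨a, rfl, hR⟩) (Derives.refl [Sum.inr a])
      simpa using this
    · have h0 : Derives (cnfProds R2 R1) [Sum.inl A] [Sum.inl B, Sum.inl C] m₀ := by
        have := Derives.step (α := []) (β := []) (P := cnfProds R2 R1)
          (Or.inl ⟨B, C, rfl, hR⟩) (Derives.refl [Sum.inl B, Sum.inl C])
        simpa using this
      have h1 : Derives (cnfProds R2 R1) ([Sum.inl B] ++ [Sum.inl C])
          (u₁.map Sum.inr ++ u₂.map Sum.inr) (c₁ + c₂) := derives_append hd1 hd2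
      have h2 := derives_trans h0 (by simpa using h1)
      rw [List.map_append]
      exact derives_cast h2 (by omega)


/-- The minimum cost of deriving the terminal string `w` from nonterminal `A`. -/
noncomputable def minCost {N T : Type*} (P : N → List (N ⊕ T) → ℕ → Prop)
    (A : N) (w : List T) : ℕ∞ :=
  sInf {c : ℕ∞ | ∃ m : ℕ, c = m ∧ Derives P [Sum.inl A] (w.map Sum.inr) m}

section Helpers2
variable {N T : Type*} {P : N → List (N ⊕ T) → ℕ → Prop}

lemma minCost_le {A : N} {u : List T} {m : ℕ}
    (h : Derives P [Sum.inl A] (u.map Sum.inr) m) : minCost P A u ≤ m :=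
  sInf_le ⟨m, rfl, h⟩

lemma minCost_cases (A : N) (u : List T) :
    minCost P A u = ⊤ ∨
    ∃ m : ℕ, minCost P A u = (m : ℕ∞) ∧ Derives P [Sum.inl A] (u.map Sum.inr) m := by
  rcases Set.eq_empty_or_nonempty
      {c : ℕ∞ | ∃ m : ℕ, c = m ∧ Derives P [Sum.inl A] (u.map Sum.inr) m} with h | h
  · left; simp [minCost, h]
  · right
    obtain ⟨m, hm, hd⟩ := csInf_mem h
    exact ⟨m, hm, hd⟩

end Helpers2


/-- Correctness of the weighted CYK algorithm: if the table `D` satisfies the CYK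
recurrences (base case on single terminals, and minimization over binary productions
and split points), then `D i j A` is the minimum total error count of a weighted
derivation of `a_i ⋯ a_{j-1}` from `A` (and `∞` if no derivation exists). -/
theorem weighted_CYK_correct {N T : Type*}
    (R2 : N → N → N → ℕ → Prop) (R1 : N → T → ℕ → Prop) (w : List T)
    (D : ℕ → ℕ → N → ℕ∞)
    (hbase : ∀ (i : ℕ) (A : N) (h : i < w.length),
      D i (i + 1) A = sInf {c : ℕ∞ | ∃ m : ℕ, c = m ∧ R1 A (w.get ⟨i, h⟩) m})
    (hstep : ∀ (i j : ℕ) (A : N), i + 2 ≤ j → j ≤ w.length →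
      D i j A = sInf {c : ℕ∞ | ∃ (B C : N) (m k : ℕ), R2 A B C m ∧ i < k ∧ k < j ∧
        c = (m : ℕ∞) + D i k B + D k j C}) :
    ∀ (i j : ℕ) (A : N), i < j → j ≤ w.length →
      D i j A = minCost (cnfProds R2 R1) A ((w.drop i).take (j - i)) := by
  suffices H : ∀ n i j A, i < j → j ≤ w.length → j - i ≤ n →
      D i j A = minCost (cnfProds R2 R1) A ((w.drop i).take (j - i)) by
    intro i j A h1 h2; exact H (j - i) i j A h1 h2 le_rfl
  intro n
  induction n with
  | zero => intro i j A h1 _ h3; omega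
  | succ n ih =>
    intro i j A h1 h2 h3
    rcases eq_or_lt_of_le (Nat.succ_le_of_lt h1) with hj | hj
    · -- base case : j = i + 1
      subst hj
      have hi : i < w.length := by omega
      have hs : (w.drop i).take (i + 1 - i) = [w.get ⟨i, hi⟩] := by
        have h1i : i + 1 - i = 1 := by omega
        rw [h1i, List.drop_eq_getElem_cons hi, List.take_cons, List.take_zero]
        · simp
        · omega
      rw [hbase i A hi, hs, minCost]
      congr 1
      ext c
      constructor
      · rintro ⟨m, rfl, hR⟩
        exact ⟨m, rfl, derives_single_iff.mpr (Or.inl ⟨_, rfl, hR⟩)⟩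
      · rintro ⟨m, rfl, hd⟩
        rcases derives_single_iff.mp hd with ⟨a, ha, hR⟩ | ⟨B, C, m₀, u₁, u₂, _, _, _, hsp, h1ne, h2ne, _, _, _⟩
        · obtain rfl : a = w.get ⟨i, hi⟩ := by simpa using ha.symm
          exact ⟨m, rfl, hR⟩
        · exfalso
          have := congrArg List.length hsp
          rcases u₁ with _ | ⟨x, u₁⟩; · exact h1ne rfl
          rcases u₂ with _ | ⟨y, u₂⟩; · exact h2ne rfl
          simp [Nat.add_assoc] at this
          omega
    · -- step case : i + 2 ≤ j
      have hij2 : i + 2 ≤ j := hj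
      rw [hstep i j A hij2 h2]
      have hslen : ((w.drop i).take (j - i)).length = j - i := by
        simp; omega
      apply le_antisymm
      · apply le_sInf
        rintro c ⟨m, rfl, hd⟩
        rcases derives_single_iff.mp hd with ⟨a, ha, hR⟩ |
            ⟨B, C, m₀, u₁, u₂, c₁, c₂, hR, hsp, h1ne, h2ne, hd1, hd2, rfl⟩
        · exfalso
          have := congrArg List.length ha
          rw [hslen] at this; simp at this; omega
        · set k := i + u₁.length with hk
          have hlen : u₁.length + u₂.length = j - i := by
            have := congrArg List.length hsp
            rw [hslen] at this; simp at this; omega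
          have hu₁pos : 0 < u₁.length := List.length_pos_iff.mpr h1ne
          have hu₂pos : 0 < u₂.length := List.length_pos_iff.mpr h2ne
          have hik : i < k := by omega
          have hkj : k < j := by omega
          have hu₁ : u₁ = (w.drop i).take (k - i) := by
            have : u₁ = ((w.drop i).take (j - i)).take u₁.length := by
              rw [hsp]; exact List.take_left.symm
            rw [this, List.take_take]
            congr 1
            omega
          have hu₂ : u₂ = (w.drop k).take (j - k) := by
            have h' : u₂ = ((w.drop i).take (j - i)).drop u₁.length := by
              rw [hsp]; exact List.drop_left.symm
            rw [h', List.drop_take, List.drop_drop]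
            congr 1; omega
          have ihB : D i k B = minCost (cnfProds R2 R1) B u₁ := by
            rw [hu₁]; exact ih i k B hik (by omega) (by omega)
          have ihC : D k j C = minCost (cnfProds R2 R1) C u₂ := by
            rw [hu₂]; exact ih k j C hkj h2 (by omega)
          calc sInf {c : ℕ∞ | ∃ (B C : N) (m k : ℕ), R2 A B C m ∧ i < k ∧ k < j ∧
                c = (m : ℕ∞) + D i k B + D k j C}
              ≤ (m₀ : ℕ∞) + D i k B + D k j C :=
                sInf_le ⟨B, C, m₀, k, hR, hik, hkj, rfl⟩
            _ ≤ ((m₀ + c₁ + c₂ : ℕ) : ℕ∞) := by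
                rw [ihB, ihC]; push_cast
                exact add_le_add (add_le_add le_rfl (minCost_le hd1)) (minCost_le hd2)
      · apply le_sInf
        rintro c ⟨B, C, m₀, k, hR, hik, hkj, rfl⟩
        have ihB : D i k B = minCost (cnfProds R2 R1) B ((w.drop i).take (k - i)) :=
          ih i k B hik (by omega) (by omega)
        have ihC : D k j C = minCost (cnfProds R2 R1) C ((w.drop k).take (j - k)) :=
          ih k j C hkj h2 (by omega)
        rw [ihB, ihC]
        rcases minCost_cases (P := cnfProds R2 R1) B ((w.drop i).take (k - i)) with
          hB | ⟨c₁, hB, hdB⟩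
        · rw [hB]; simp
        rcases minCost_cases (P := cnfProds R2 R1) C ((w.drop k).take (j - k)) with
          hC | ⟨c₂, hC, hdC⟩
        · rw [hC]; simp
        rw [hB, hC]
        have hsplit : (w.drop i).take (j - i) =
            (w.drop i).take (k - i) ++ (w.drop k).take (j - k) := by
          have : j - i = (k - i) + (j - k) := by omega
          rw [this, List.take_add]
          congr 2
          rw [List.drop_drop]
          congr 1
          omega
        have h1ne : (w.drop i).take (k - i) ≠ [] := by
          have : ((w.drop i).take (k - i)).length = k - i := by simp; omega
          intro h; rw [h] at this; simp at this; omega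
        have h2ne : (w.drop k).take (j - k) ≠ [] := by
          have : ((w.drop k).take (j - k)).length = j - k := by simp; omega
          intro h; rw [h] at this; simp at this; omega
        have hder : Derives (cnfProds R2 R1) [Sum.inl A]
            (((w.drop i).take (j - i)).map Sum.inr) (m₀ + c₁ + c₂) :=
          derives_single_iff.mpr (Or.inr ⟨B, C, m₀, _, _, c₁, c₂, hR, hsplit, h1ne, h2ne,
            hdB, hdC, rfl⟩)
        refine sInf_le ⟨m₀ + c₁ + c₂, ?_, hder⟩
        push_cast
        ring
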